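/- A countable union of shy Borel subsets of a Banach space X is shy, and the complement of a shy set is dense in X. -/

import Mathlib

open MeasureTheory

/-- A Borel set in a Banach space is shy if some Borel measure, positive and finite on a
compact set, vanishes on all its translates. -/
def Shy {X : Type*} [NormedAddCommGroup X] [NormedSpace ℝ X]
    [MeasurableSpace X] [BorelSpace X] (S : Set X) : Prop :=
  ∃ μ : Measure X, (∃ U : Set X, IsCompact U ∧ 0 < μ U ∧ μ U < ⊤) ∧
    ∀ x : X, μ ((x + ·) '' S) = 0

section Aux

open Set Filter ProbabilityTheory
open scoped Topology ENNReal

lemma quantile_rep (ρ : Measure ℝ) [IsProbabilityMeasure ρ] :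
    ∃ g : ℝ → ℝ, Measurable g ∧ Measure.map g (volume.restrict (Set.Ioc (0:ℝ) 1)) = ρ := by
  set F := cdf ρ with hF
  set g0 : ℝ → ℝ := fun t => sInf {x | t ≤ F x} with hg0
  have hbdd : ∀ {t : ℝ}, 0 < t → BddBelow {x | t ≤ F x} := by
    intro t ht
    obtain ⟨y, hy⟩ := ((tendsto_cdf_atBot ρ).eventually_lt_const ht).exists
    refine ⟨y, fun s hs => ?_⟩
    by_contra h
    push_neg at h
    exact absurd hs (not_le.2 (lt_of_le_of_lt ((monotone_cdf ρ) h.le) hy))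
  have hne : ∀ {t : ℝ}, t < 1 → {x | t ≤ F x}.Nonempty := by
    intro t ht
    obtain ⟨y, hy⟩ := ((tendsto_cdf_atTop ρ).eventually_const_lt ht).exists
    exact ⟨y, hy.le⟩
  have hiff : ∀ {t x : ℝ}, 0 < t → t < 1 → (g0 t ≤ x ↔ t ≤ F x) := by
    intro t x ht ht1
    constructor
    · intro h
      have key : ∀ y, x < y → t ≤ F y := by
        intro y hy
        obtain ⟨s, hs, hsy⟩ := exists_lt_of_csInf_lt (hne ht1) (lt_of_le_of_lt h hy)
        exact le_trans hs ((monotone_cdf ρ) hsy.le)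
      have htd : Tendsto F (𝓝[>] x) (𝓝 (F x)) :=
        (F.right_continuous x).tendsto.mono_left (nhdsWithin_mono x Ioi_subset_Ici_self)
      exact ge_of_tendsto htd (eventually_mem_nhdsWithin.mono fun y hy => key y hy)
    · intro h
      exact csInf_le (hbdd ht) h
  have hmono : MonotoneOn g0 (Ioo (0:ℝ) 1) := fun a ha b hb hab =>
    csInf_le_csInf (hbdd ha.1) (hne hb.2) (fun x hx => le_trans hab hx)
  set m := volume.restrict (Ioo (0:ℝ) 1) with hm
  have hae : AEMeasurable g0 m := aemeasurable_restrict_of_monotoneOn measurableSet_Ioo hmono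
  have hmap : Measure.map g0 m = ρ := by
    have hfin : IsFiniteMeasure (Measure.map g0 m) := by
      constructor
      rw [Measure.map_apply_of_aemeasurable hae MeasurableSet.univ]
      simp [hm, Real.volume_Ioo]
    refine Measure.ext_of_Iic _ ρ fun x => ?_
    rw [Measure.map_apply_of_aemeasurable hae measurableSet_Iic, hm,
      Measure.restrict_apply' measurableSet_Ioo]
    have hset : g0 ⁻¹' (Iic x) ∩ Ioo 0 1 = Ioc 0 (F x) \ {1} := by
      ext t
      simp only [mem_inter_iff, mem_preimage, mem_Iic, mem_Ioo, mem_diff, mem_Ioc,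
        mem_singleton_iff]
      constructor
      · rintro ⟨h1, h2, h3⟩
        exact ⟨⟨h2, (hiff h2 h3).1 h1⟩, ne_of_lt h3⟩
      · rintro ⟨⟨h1, h2⟩, h3⟩
        have ht1 : t < 1 := lt_of_le_of_ne (le_trans h2 (cdf_le_one ρ x)) h3
        exact ⟨(hiff h1 ht1).2 h2, h1, ht1⟩
    rw [hset, measure_diff_null (Real.volume_singleton), Real.volume_Ioc, ← ofReal_cdf ρ x,
      sub_zero]
  refine ⟨hae.mk g0, hae.measurable_mk, ?_⟩
  rw [← Measure.restrict_congr_set Ioo_ae_eq_Ioc, ← hm, ← Measure.map_congr hae.ae_eq_mk, hmap]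


lemma circle_rep {X : Type*} [NormedAddCommGroup X] [NormedSpace ℝ X] [CompleteSpace X]
    [TopologicalSpace.SeparableSpace X] [MeasurableSpace X] [BorelSpace X]
    (ν : Measure X) [IsProbabilityMeasure ν] {K : Set X} (hK : IsCompact K) (hν : ν K = 1) :
    ∃ f : AddCircle (1:ℝ) → X, Measurable f ∧ (∀ z, f z ∈ K) ∧
      Measure.map f volume = ν := by
  classical
  have hKne : K.Nonempty := nonempty_of_measure_ne_zero (by rw [hν]; exact one_ne_zero)
  obtain ⟨k₀, hk₀⟩ := hKne
  obtain ⟨e, he⟩ := MeasureTheory.exists_measurableEmbedding_real X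
  set ρ : Measure ℝ := Measure.map e ν with hρ
  haveI : IsProbabilityMeasure ρ := Measure.isProbabilityMeasure_map he.measurable.aemeasurable
  obtain ⟨g, hg, hgmap⟩ := quantile_rep ρ
  set E := AddCircle.measurableEquivIoc 1 0 with hE
  set σ : AddCircle (1:ℝ) → ℝ := fun z => ((E z : Ioc (0:ℝ) (0+1)) : ℝ) with hσ
  have hσm : Measurable σ := measurable_subtype_coe.comp E.measurable
  have hσmap : Measure.map σ (volume : Measure (AddCircle (1:ℝ)))
      = volume.restrict (Ioc (0:ℝ) 1) := by
    have hmk := (AddCircle.measurePreserving_mk 1 0).map_eq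
    rw [← hmk, Measure.map_map hσm AddCircle.measurable_mk']
    have hid : (σ ∘ (QuotientAddGroup.mk : ℝ → AddCircle (1:ℝ)))
        =ᵐ[volume.restrict (Ioc (0:ℝ) (0+1))] id := by
      filter_upwards [ae_restrict_mem measurableSet_Ioc] with x hx
      show σ ((x : ℝ) : AddCircle (1:ℝ)) = x
      rw [hσ]
      simp only [hE, AddCircle.measurableEquivIoc, MeasurableEquiv.coe_mk, Equiv.coe_fn_mk]
      show ((AddCircle.equivIoc 1 0 ((x : ℝ) : AddCircle (1:ℝ)) : Ioc (0:ℝ) (0+1)) : ℝ) = x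
      rw [AddCircle.equivIoc, QuotientAddGroup.equivIocMod_coe]
      exact (toIocMod_eq_self one_pos).2 hx
    rw [Measure.map_congr hid, Measure.map_id, zero_add]
  set B := e '' K with hB
  have hBm : MeasurableSet B := he.measurableSet_image' hK.measurableSet
  set Q : ℝ → X := fun y =>
    if h : y ∈ B then rangeSplitting e ⟨y, image_subset_range e K h⟩ else k₀ with hQ
  have hQm : Measurable Q :=
    Measurable.dite (s := B)
      (f := fun w : B => rangeSplitting e ⟨w.1, image_subset_range e K w.2⟩)
      (g := fun _ : ↥(Bᶜ) => k₀)
      (he.measurable_rangeSplitting.comp (Measurable.subtype_mk measurable_subtype_coe))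
      measurable_const hBm
  have hQK : ∀ y, Q y ∈ K := by
    intro y
    show (if h : y ∈ B then rangeSplitting e ⟨y, image_subset_range e K h⟩ else k₀) ∈ K
    split_ifs with h
    · obtain ⟨x, hxK, hxe⟩ := id h
      have := apply_rangeSplitting e ⟨y, image_subset_range e K h⟩
      have hx : rangeSplitting e ⟨y, image_subset_range e K h⟩ = x :=
        he.injective (by rw [this, hxe])
      rw [hx]; exact hxK
    · exact hk₀
  have hQe : ∀ x ∈ K, Q (e x) = x := by
    intro x hx
    have h : e x ∈ B := mem_image_of_mem e hx
    show (if h : e x ∈ B then rangeSplitting e ⟨e x, image_subset_range e K h⟩ else k₀) = x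
    rw [dif_pos h]
    exact he.injective (apply_rangeSplitting e ⟨e x, image_subset_range e K h⟩)
  refine ⟨Q ∘ g ∘ σ, hQm.comp (hg.comp hσm), fun z => hQK _, ?_⟩
  have h1 : Measure.map (g ∘ σ) (volume : Measure (AddCircle (1:ℝ))) = ρ := by
    rw [← Measure.map_map hg hσm, hσmap, hgmap]
  have h2 : Measure.map (Q ∘ g ∘ σ) (volume : Measure (AddCircle (1:ℝ))) = Measure.map Q ρ := by
    rw [← h1, ← Measure.map_map hQm (hg.comp hσm)]
  rw [h2, hρ, Measure.map_map hQm he.measurable]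
  have hae : (Q ∘ e) =ᵐ[ν] id := by
    have hK0 : ν Kᶜ = 0 := by
      rw [measure_compl hK.measurableSet (measure_ne_top ν K), hν, measure_univ, tsub_self]
    filter_upwards [(ae_iff.2 (by exact hK0) : ∀ᵐ x ∂ν, x ∈ K)] with x hx
    exact hQe x hx
  rw [Measure.map_congr hae, Measure.map_id]


lemma shy_preimage {X : Type*} [NormedAddCommGroup X] [NormedSpace ℝ X]
    [MeasurableSpace X] [BorelSpace X] {S : Set X} {μ : Measure X}
    (htr : ∀ x : X, μ ((x + ·) '' S) = 0) (x : X) : μ ((x + ·) ⁻¹' S) = 0 := by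
  have := htr (-x)
  rwa [image_add_left, neg_neg] at this

lemma exists_ball_pos {X : Type*} [NormedAddCommGroup X] [MeasurableSpace X]
    (μ : Measure X) {U : Set X} (hU : IsCompact U) (hpos : 0 < μ U)
    {ε : ℝ} (hε : 0 < ε) : ∃ c : X, μ (U ∩ Metric.ball c ε) ≠ 0 := by
  have hcov : U ⊆ ⋃ c : U, Metric.ball (c : X) ε := fun u hu =>
    mem_iUnion.2 ⟨⟨u, hu⟩, Metric.mem_ball_self hε⟩
  obtain ⟨t, ht⟩ := hU.elim_finite_subcover (fun c : U => Metric.ball (c : X) ε)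
    (fun _ => Metric.isOpen_ball) hcov
  by_contra h
  push_neg at h
  have hU0 : μ U = 0 := by
    have hsub : U ⊆ ⋃ c ∈ t, (U ∩ Metric.ball (c : X) ε) := by
      intro u hu
      obtain ⟨c, hc, hcu⟩ := mem_iUnion₂.1 (ht hu)
      exact mem_iUnion₂.2 ⟨c, hc, hu, hcu⟩
    refine measure_mono_null hsub ((measure_biUnion_null_iff t.countable_toSet).2 ?_)
    intro c _
    exact h (c : X)
  exact absurd hU0 (ne_of_gt hpos)

lemma shy_localize {X : Type*} [NormedAddCommGroup X] [NormedSpace ℝ X]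
    [MeasurableSpace X] [BorelSpace X] {S : Set X} (hS : Shy S) {ε : ℝ} (hε : 0 < ε) :
    ∃ (ν : Measure X) (K : Set X), IsProbabilityMeasure ν ∧ IsCompact K ∧
      K ⊆ Metric.closedBall 0 ε ∧ ν K = 1 ∧ ∀ x : X, ν ((x + ·) ⁻¹' S) = 0 := by
  obtain ⟨μ, ⟨U, hU, hpos, hfin⟩, htr⟩ := hS
  obtain ⟨c, hc⟩ := exists_ball_pos μ hU hpos hε
  set A := U ∩ Metric.closedBall c ε with hA
  have hA0 : μ A ≠ 0 := fun h0 =>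
    hc (measure_mono_null (inter_subset_inter_right U Metric.ball_subset_closedBall) h0)
  have hAfin : μ A ≠ ⊤ := (lt_of_le_of_lt (measure_mono inter_subset_left) hfin).ne
  have hAc : IsCompact A := hU.inter_right Metric.isClosed_closedBall
  have hAm : MeasurableSet A := hAc.isClosed.measurableSet
  set E := (Homeomorph.addRight (-c)).toMeasurableEquiv with hE
  have hEapp : ∀ y : X, E y = y + -c := fun _ => rfl
  set ν : Measure X := (μ A)⁻¹ • Measure.map E (μ.restrict A) with hν
  set K := (fun y : X => y + -c) '' A with hK
  have hKA : A ⊆ E ⁻¹' K := fun a ha => ⟨a, ha, rfl⟩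
  have hνK : ν K = 1 := by
    rw [hν, Measure.smul_apply, MeasurableEquiv.map_apply, smul_eq_mul,
      Measure.restrict_apply' hAm, inter_eq_right.2 hKA]
    exact ENNReal.inv_mul_cancel hA0 hAfin
  have hνuniv : ν univ = 1 := by
    rw [hν, Measure.smul_apply, MeasurableEquiv.map_apply, smul_eq_mul, preimage_univ,
      Measure.restrict_apply' hAm, univ_inter]
    exact ENNReal.inv_mul_cancel hA0 hAfin
  refine ⟨ν, K, ⟨hνuniv⟩, hAc.image (Homeomorph.addRight (-c)).continuous, ?_, hνK, ?_⟩
  · rintro _ ⟨a, ⟨_, ha2⟩, rfl⟩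
    rw [Metric.mem_closedBall] at ha2 ⊢
    rw [dist_eq_norm] at ha2 ⊢
    simpa [sub_eq_add_neg] using ha2
  · intro x
    have hset : E ⁻¹' ((x + ·) ⁻¹' S) = ((x + -c) + ·) ⁻¹' S := by
      ext y
      simp only [mem_preimage, hEapp]
      rw [add_comm y (-c), ← add_assoc]
    rw [hν, Measure.smul_apply, MeasurableEquiv.map_apply, hset, smul_eq_mul]
    have hle : μ.restrict A (((x + -c) + ·) ⁻¹' S) ≤ 0 := by
      rw [← shy_preimage htr (x + -c)]
      exact Measure.le_iff'.1 Measure.restrict_le_self _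
    rw [le_antisymm hle zero_le, mul_zero]


lemma dense_compl_of_shy {X : Type*} [NormedAddCommGroup X] [NormedSpace ℝ X]
    [MeasurableSpace X] [BorelSpace X] {S : Set X} (hS : Shy S) : Dense Sᶜ := by
  obtain ⟨μ, ⟨U, hU, hpos, hfin⟩, htr⟩ := hS
  rw [dense_iff_inter_open]
  rintro V hV ⟨v, hv⟩
  by_contra h
  have hVS : V ⊆ S := by
    intro y hy
    by_contra hn
    exact h ⟨y, hy, hn⟩
  obtain ⟨r, hr, hball⟩ := Metric.isOpen_iff.1 hV v hv
  obtain ⟨c, hc⟩ := exists_ball_pos μ hU hpos (half_pos hr)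
  have hsub : U ∩ Metric.ball c (r/2) ⊆ ((v - c) + ·) ⁻¹' S := by
    rintro y ⟨-, hy⟩
    rw [Metric.mem_ball] at hy
    refine hVS (hball ?_)
    rw [Metric.mem_ball]
    have : dist ((v - c) + y) v = dist y c := by
      rw [dist_eq_norm, dist_eq_norm, show v - c + y - v = y - c by abel]
    rw [this]
    exact lt_trans hy (half_lt_self hr)
  exact hc (measure_mono_null hsub (shy_preimage htr _))

lemma shy_iUnion {X : Type*} [NormedAddCommGroup X] [NormedSpace ℝ X] [CompleteSpace X]
    [TopologicalSpace.SeparableSpace X] [MeasurableSpace X] [BorelSpace X]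
    (S : ℕ → Set X) (hSm : ∀ n, MeasurableSet (S n)) (hS : ∀ n, Shy (S n)) :
    Shy (⋃ n, S n) := by
  classical
  have hε : ∀ n : ℕ, (0:ℝ) < (1/2)^n := fun n => by positivity
  choose ν K hνP hKc hKb hνK hνtr using fun n => shy_localize (hS n) (hε n)
  haveI : ∀ n, IsProbabilityMeasure (ν n) := hνP
  choose f hfm hfK hfmap using fun n => circle_rep (ν n) (hKc n) (hνK n)
  have hfb : ∀ n z, ‖f n z‖ ≤ (1/2)^n := fun n z => by
    have := hKb n (hfK n z)
    rwa [Metric.mem_closedBall, dist_zero_right] at this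
  have hsum : Summable (fun n : ℕ => (1/2:ℝ)^n) :=
    summable_geometric_of_lt_one (by norm_num) (by norm_num)
  set P : Measure (ℕ → AddCircle (1:ℝ)) := Measure.addHaarMeasure ⊤ with hP
  haveI hPinv : P.IsAddLeftInvariant := by rw [hP]; infer_instance
  have hPuniv : P univ = 1 := by
    rw [hP, ← TopologicalSpace.PositiveCompacts.coe_top]
    exact Measure.addHaarMeasure_self
  haveI : IsFiniteMeasure P := ⟨by rw [hPuniv]; exact ENNReal.one_lt_top⟩
  have hsummf : ∀ ω : ℕ → AddCircle (1:ℝ), Summable (fun m => f m (ω m)) := fun ω =>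
    Summable.of_norm_bounded hsum (fun m => hfb m (ω m))
  set SF : (ℕ → AddCircle (1:ℝ)) → X := fun ω => ∑' m, f m (ω m) with hSF
  have hcoord : ∀ m : ℕ, Measurable fun ω : ℕ → AddCircle (1:ℝ) => f m (ω m) := fun m =>
    (hfm m).comp (measurable_pi_apply m)
  have hSFm : Measurable SF := by
    apply measurable_of_tendsto_metrizable
      (f := fun N ω => ∑ m ∈ Finset.range N, f m (ω m))
      (fun N => Finset.measurable_sum _ (fun m _ => hcoord m))
    exact tendsto_pi_nhds.2 fun ω => (hsummf ω).hasSum.tendsto_sum_nat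
  haveI : ∀ n, CompactSpace {x : X // x ∈ K n} := fun n => isCompact_iff_compactSpace.1 (hKc n)
  set T : Set X := Set.range (fun xs : (∀ n, {x : X // x ∈ K n}) => ∑' m, ((xs m : X))) with hT
  have hTc : IsCompact T := by
    apply isCompact_range
    apply continuous_tsum (fun m => continuous_subtype_val.comp (continuous_apply m)) hsum
    intro m xs
    exact by simpa [Metric.mem_closedBall, dist_zero_right] using hKb m (xs m).2
  have hSFT : ∀ ω, SF ω ∈ T := fun ω => ⟨fun m => ⟨f m (ω m), hfK m (ω m)⟩, rfl⟩
  set μ : Measure X := Measure.map SF P with hμ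
  have hμT : μ T = 1 := by
    rw [hμ, Measure.map_apply hSFm hTc.isClosed.measurableSet]
    have h3 : SF ⁻¹' T = univ := eq_univ_of_forall hSFT
    rw [h3, hPuniv]
  have key : ∀ (n : ℕ) (y : X), μ ((y + ·) ⁻¹' S n) = 0 := by
    intro n y
    have hWm : MeasurableSet ((y + ·) ⁻¹' S n) := (measurable_id.const_add y) (hSm n)
    have hBm : MeasurableSet (SF ⁻¹' ((y + ·) ⁻¹' S n)) := hSFm hWm
    set δ : AddCircle (1:ℝ) → (ℕ → AddCircle (1:ℝ)) :=
      fun z => Pi.single (M := fun _ : ℕ => AddCircle (1:ℝ)) n z with hδ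
    have hδn : ∀ z, δ z n = z := by
      intro z; simp only [hδ]; exact Pi.single_eq_same (M := fun _ : ℕ => AddCircle (1:ℝ)) n z
    have hδm : ∀ z m, m ≠ n → δ z m = 0 := by
      intro z m hm; simp only [hδ]; exact Pi.single_eq_of_ne (M := fun _ : ℕ => AddCircle (1:ℝ)) hm z
    set F : AddCircle (1:ℝ) × (ℕ → AddCircle (1:ℝ)) → (ℕ → AddCircle (1:ℝ)) :=
      fun p => p.2 + δ p.1 with hF
    have hFm : Measurable F := by
      apply measurable_pi_lambda
      intro m
      have h0 : (fun p : AddCircle (1:ℝ) × (ℕ → AddCircle (1:ℝ)) => F p m)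
          = fun p => p.2 m + δ p.1 m := rfl
      rw [h0]
      by_cases hm : m = n
      · subst hm
        have h1 : (fun p : AddCircle (1:ℝ) × (ℕ → AddCircle (1:ℝ)) => p.2 m + δ p.1 m)
            = fun p => p.2 m + p.1 := by
          funext p; rw [hδn]
        rw [h1]
        exact ((measurable_pi_apply m).comp measurable_snd).add measurable_fst
      · have h1 : (fun p : AddCircle (1:ℝ) × (ℕ → AddCircle (1:ℝ)) => p.2 m + δ p.1 m)
            = fun p => p.2 m := by
          funext p; rw [hδm _ _ hm, add_zero]
        rw [h1]
        exact (measurable_pi_apply m).comp measurable_snd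
    have hmapF : Measure.map F ((volume : Measure (AddCircle (1:ℝ))).prod P) = P := by
      refine Measure.ext fun A hA => ?_
      rw [Measure.map_apply hFm hA, Measure.prod_apply (hFm hA)]
      have hconst : ∀ z : AddCircle (1:ℝ), P (Prod.mk z ⁻¹' (F ⁻¹' A)) = P A := by
        intro z
        have h1 : Prod.mk z ⁻¹' (F ⁻¹' A) = (fun ω => δ z + ω) ⁻¹' A := by
          ext ω
          simp only [mem_preimage, hF]
          rw [add_comm]
        rw [h1, measure_preimage_add]
      simp_rw [hconst]
      rw [lintegral_const, AddCircle.measure_univ, ENNReal.ofReal_one, mul_one]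
    have hPB : P (SF ⁻¹' ((y + ·) ⁻¹' S n)) = 0 := by
      rw [← hmapF, Measure.map_apply hFm hBm, Measure.prod_apply_symm (hFm hBm)]
      have hzero : ∀ ω : ℕ → AddCircle (1:ℝ),
          (volume : Measure (AddCircle (1:ℝ)))
            ((fun z => (z, ω)) ⁻¹' (F ⁻¹' (SF ⁻¹' ((y + ·) ⁻¹' S n)))) = 0 := by
        intro ω
        have hSFadd : ∀ z : AddCircle (1:ℝ),
            SF (ω + δ z) = f n (ω n + z) + (SF ω - f n (ω n)) := by
          intro z
          have hs2 : Summable (fun m => f m ((ω + δ z) m)) := hsummf _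
          have h1 := Summable.tsum_eq_add_tsum_ite hs2 n
          have h2 := Summable.tsum_eq_add_tsum_ite (hsummf ω) n
          have htails : (∑' m, if m = n then 0 else f m ((ω + δ z) m))
              = ∑' m, if m = n then 0 else f m (ω m) := by
            congr 1
            funext m
            by_cases hm : m = n
            · simp [hm]
            · simp [hm, hδm z m hm]
          have hn1 : (ω + δ z) n = ω n + z := by
            rw [Pi.add_apply, hδn]
          rw [hSF]
          simp only
          rw [h1, hn1, htails]
          have : (∑' m, if m = n then 0 else f m (ω m)) = SF ω - f n (ω n) := by
            rw [hSF]
            simp only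
            rw [h2]
            abel
          rw [this]
        have hseteq : ((fun z => (z, ω)) ⁻¹' (F ⁻¹' (SF ⁻¹' ((y + ·) ⁻¹' S n))))
            = ((ω n + ·) ⁻¹'
              (f n ⁻¹' (((y + (SF ω - f n (ω n))) + ·) ⁻¹' S n))) := by
          ext z
          simp only [mem_preimage, hF]
          rw [hSFadd z]
          constructor
          · intro hz
            have : y + (SF ω - f n (ω n)) + f n (ω n + z)
                = y + (f n (ω n + z) + (SF ω - f n (ω n))) := by abel
            rw [this]
            exact hz
          · intro hz
            have : y + (f n (ω n + z) + (SF ω - f n (ω n)))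
                = y + (SF ω - f n (ω n)) + f n (ω n + z) := by abel
            rw [this]
            exact hz
        rw [hseteq, measure_preimage_add]
        have hWm' : MeasurableSet (((y + (SF ω - f n (ω n))) + ·) ⁻¹' S n) :=
          (measurable_id.const_add _) (hSm n)
        rw [← Measure.map_apply (hfm n) hWm', hfmap n]
        exact hνtr n _
      simp_rw [hzero]
      exact lintegral_zero
    rw [hμ, Measure.map_apply hSFm hWm]
    exact hPB
  refine ⟨μ, ⟨T, hTc, by rw [hμT]; exact one_pos, by rw [hμT]; exact ENNReal.one_lt_top⟩, ?_⟩
  intro x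
  rw [image_iUnion]
  refine measure_iUnion_null fun n => ?_
  rw [image_add_left]
  exact key n (-x)


end Aux

/-- A countable union of shy Borel subsets of a separable Banach space is shy, and the
complement of a shy set is dense. -/
theorem countable_union_shy_and_complement_dense
    {X : Type*} [NormedAddCommGroup X] [NormedSpace ℝ X] [CompleteSpace X]
    [TopologicalSpace.SeparableSpace X] [MeasurableSpace X] [BorelSpace X] :
    (∀ S : ℕ → Set X, (∀ n, MeasurableSet (S n)) → (∀ n, Shy (S n)) →
        Shy (⋃ n, S n)) ∧
      ∀ S : Set X, MeasurableSet S → Shy S → Dense Sᶜ := by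
  exact ⟨fun S hm hs => shy_iUnion S hm hs, fun S _ hS => dense_compl_of_shy hS⟩
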